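/- Let $m \geq 2$, let $\mathcal{C} \subseteq \mathbb{R}_{\geq 0}^m$ be a convex, permutation-symmetric subset of $\overline{\mathcal{N}}$, and let $x \in \mathcal{C}$ with $x_1 \geq \cdots \geq x_m$. Suppose $y \in \mathbb{R}_{\geq 0}^m$ with $y_1 \geq \cdots \geq y_m$ is weakly majorized by $x$, lies in the boundary set $\partial\mathcal{N}$ (i.e. $\max_{i<j} y_i y_j = 1$ or $\prod_i (1-y_i) + \sum_i (1-y_1)\cdots y_i \cdots (1-y_m) = 0$), and $y_1 > 1$. Then $\sum_{i=1}^m y_i = \sum_{i=1}^m x_i$. -/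

import Mathlib

open Finset

/-- The region `𝒩̄`. -/
def Nbar (m : ℕ) : Set (Fin m → ℝ) :=
  {a | (∀ i, 0 ≤ a i) ∧ (∀ i j, i ≠ j → a i * a j ≤ 1) ∧
    0 ≤ ∏ i, (1 - a i) + ∑ i, a i * ∏ j ∈ univ.erase i, (1 - a j)}

lemma prod_sum_factor {m : ℕ} (a : Fin m → ℝ) (i0 : Fin m)
    (h0 : a i0 ≠ 1) (h : ∀ i, i ≠ i0 → a i ≠ 1) :
    ∏ i, (1 - a i) + ∑ i, a i * ∏ j ∈ univ.erase i, (1 - a j)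
      = ((∏ i ∈ univ.erase i0, (1 - a i)) * (1 - a i0)) *
        (1 / (1 - a i0) + ∑ i ∈ univ.erase i0, a i / (1 - a i)) := by
  have h0' : (1:ℝ) - a i0 ≠ 0 := sub_ne_zero.mpr (fun hh => h0 hh.symm)
  have hP : ∀ i ∈ univ.erase i0, a i * ∏ j ∈ univ.erase i, (1 - a j)
      = (1 - a i0) * ((∏ j ∈ univ.erase i0, (1 - a j)) * (a i / (1 - a i))) := by
    intro i hi
    have hi0 : i ≠ i0 := (mem_erase.mp hi).1
    have hne : (1 : ℝ) - a i ≠ 0 := sub_ne_zero.mpr (fun hh => h i hi0 hh.symm)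
    have h1 : ∏ j ∈ univ.erase i, (1 - a j)
        = (1 - a i0) * ∏ j ∈ (univ.erase i).erase i0, (1 - a j) :=
      (Finset.mul_prod_erase _ _ (by simp [Ne.symm hi0])).symm
    have h2 : (univ.erase i).erase i0 = (univ.erase i0).erase i :=
      Finset.erase_right_comm
    have h4 : ∏ j ∈ (univ.erase i0).erase i, (1 - a j)
        = (∏ j ∈ univ.erase i0, (1 - a j)) / (1 - a i) := by
      rw [eq_div_iff hne, mul_comm]
      exact Finset.mul_prod_erase (univ.erase i0) (fun j => 1 - a j)
        (mem_erase.mpr ⟨hi0, mem_univ i⟩)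
    rw [h1, h2, h4]
    field_simp
  have e1 : ∏ i, (1 - a i) = (1 - a i0) * ∏ i ∈ univ.erase i0, (1 - a i) :=
    (Finset.mul_prod_erase _ _ (mem_univ i0)).symm
  have e2 : ∑ i, a i * ∏ j ∈ univ.erase i, (1 - a j)
      = a i0 * ∏ j ∈ univ.erase i0, (1 - a j)
        + ∑ i ∈ univ.erase i0, (1 - a i0) * ((∏ j ∈ univ.erase i0, (1 - a j)) * (a i / (1 - a i))) := by
    rw [← Finset.add_sum_erase _ _ (mem_univ i0)]
    exact congrArg _ (Finset.sum_congr rfl hP)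
  rw [e1, e2, ← Finset.mul_sum, ← Finset.mul_sum]
  field_simp
  ring

lemma G_nonpos {m : ℕ} (a : Fin m → ℝ) (i0 : Fin m) (ha : a ∈ Nbar m)
    (h0 : 1 < a i0) (h1 : ∀ i, i ≠ i0 → a i < 1) :
    1 / (1 - a i0) + ∑ i ∈ univ.erase i0, a i / (1 - a i) ≤ 0 := by
  have hF := ha.2.2
  rw [prod_sum_factor a i0 (by linarith) (fun i hi => (h1 i hi).ne)] at hF
  have hP : 0 < ∏ i ∈ univ.erase i0, (1 - a i) :=
    Finset.prod_pos (fun i hi => by have := h1 i (mem_erase.mp hi).1; linarith)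
  by_contra hc
  push_neg at hc
  have hneg : (∏ i ∈ univ.erase i0, (1 - a i)) * (1 - a i0) < 0 :=
    mul_neg_of_pos_of_neg hP (by linarith)
  have := mul_neg_of_neg_of_pos hneg hc
  linarith

lemma exists_dominating {m : ℕ} (C : Set (Fin m → ℝ)) (hconv : Convex ℝ C)
    (hsym : ∀ a ∈ C, ∀ σ : Equiv.Perm (Fin m), a ∘ σ ∈ C)
    (y : Fin m → ℝ) (hysort : Antitone y) :
    ∀ n (x : Fin m → ℝ), x ∈ C →
      (univ.filter (fun i => x i ≠ y i)).card ≤ n →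
      (∀ k : ℕ, k ≤ m → ∑ i ∈ univ.filter (fun i : Fin m => (i : ℕ) < k), y i ≤
        ∑ i ∈ univ.filter (fun i : Fin m => (i : ℕ) < k), x i) →
      ∃ z ∈ C, (∀ i, y i ≤ z i) ∧ ∑ i, z i = ∑ i, x i := by
  intro n
  induction n with
  | zero =>
    intro x hx hcard _
    refine ⟨x, hx, fun i => ?_, rfl⟩
    by_contra hne
    have hmem : i ∈ univ.filter (fun i => x i ≠ y i) := by
      simp only [mem_filter, mem_univ, true_and]
      intro h; exact hne (le_of_eq h.symm)
    have := Finset.card_pos.mpr ⟨i, hmem⟩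
    omega
  | succ n ih =>
    intro x hx hcard hmaj
    by_cases hall : ∀ i, y i ≤ x i
    · exact ⟨x, hx, hall, rfl⟩
    push_neg at hall
    have hBne : (univ.filter (fun i => x i < y i)).Nonempty := by
      obtain ⟨i, hi⟩ := hall
      exact ⟨i, by simp [hi]⟩
    set k := (univ.filter (fun i => x i < y i)).min' hBne with hk
    have hkB := Finset.min'_mem (univ.filter (fun i => x i < y i)) hBne
    have hkx : x k < y k := by simpa using hkB
    have hgood : ∀ i : Fin m, i < k → y i ≤ x i := by
      intro i hik
      by_contra hc
      push_neg at hc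
      have : k ≤ i := Finset.min'_le _ _ (by simp [hc])
      exact absurd this (not_le.mpr hik)
    -- partial sums split at k
    have hset : univ.filter (fun i : Fin m => (i : ℕ) < (k : ℕ) + 1)
        = insert k (univ.filter (fun i : Fin m => (i : ℕ) < (k : ℕ))) := by
      ext i
      simp only [mem_filter, mem_univ, true_and, mem_insert, Fin.ext_iff]
      omega
    have hknot : k ∉ univ.filter (fun i : Fin m => (i : ℕ) < (k : ℕ)) := by simp
    have hsplit : ∀ f : Fin m → ℝ,
        ∑ i ∈ univ.filter (fun i : Fin m => (i : ℕ) < (k : ℕ) + 1), f i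
          = f k + ∑ i ∈ univ.filter (fun i : Fin m => (i : ℕ) < (k : ℕ)), f i := by
      intro f; rw [hset, Finset.sum_insert hknot]
    have hsumlt : ∑ i ∈ univ.filter (fun i : Fin m => (i : ℕ) < (k : ℕ)), y i
        < ∑ i ∈ univ.filter (fun i : Fin m => (i : ℕ) < (k : ℕ)), x i := by
      have h1 := hmaj ((k : ℕ) + 1) k.isLt
      rw [hsplit y, hsplit x] at h1
      linarith
    obtain ⟨j, hjk, hjx⟩ : ∃ j : Fin m, j < k ∧ y j < x j := by
      by_contra hc
      push_neg at hc
      have : ∑ i ∈ univ.filter (fun i : Fin m => (i : ℕ) < (k : ℕ)), x i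
          ≤ ∑ i ∈ univ.filter (fun i : Fin m => (i : ℕ) < (k : ℕ)), y i := by
        apply Finset.sum_le_sum
        intro i hi
        have hik : i < k := by
          have := (mem_filter.mp hi).2
          exact Fin.lt_def.mpr this
        exact hc i hik
      linarith
    have hjk' : j ≠ k := ne_of_lt hjk
    have hyjk : y k ≤ y j := hysort hjk.le
    have hxjk : x k < x j := by linarith
    set δ := min (x j - y j) (y k - x k) with hδ
    have hδpos : 0 < δ := lt_min (by linarith) (by linarith)
    have hδj : δ ≤ x j - y j := min_le_left _ _
    have hδk : δ ≤ y k - x k := min_le_right _ _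
    have hxjk0 : (0:ℝ) < x j - x k := by linarith
    set t := δ / (x j - x k) with ht
    have ht0 : 0 ≤ t := le_of_lt (div_pos hδpos hxjk0)
    have ht1 : t ≤ 1 := (div_le_one hxjk0).mpr (by linarith)
    have htδ : t * (x j - x k) = δ := div_mul_cancel₀ _ (ne_of_gt hxjk0)
    set w := x ∘ (Equiv.swap j k) with hw
    have hwC : w ∈ C := hsym x hx _
    set x' := fun i => (1 - t) * x i + t * w i with hx'def
    have hx'C : x' ∈ C := by
      have hmem := hconv (a := 1 - t) (b := t) hx hwC (by linarith) ht0 (by ring)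
      have : x' = (1 - t) • x + t • w := by
        funext i; simp [hx'def, smul_eq_mul]
      rwa [this]
    have hwj : w j = x k := by simp [hw, Equiv.swap_apply_left]
    have hwk : w k = x j := by simp [hw, Equiv.swap_apply_right]
    have hwi : ∀ i, i ≠ j → i ≠ k → w i = x i := fun i h1 h2 => by
      simp [hw, Equiv.swap_apply_of_ne_of_ne h1 h2]
    have hx'j : x' j = x j - δ := by
      have : (1 - t) * x j + t * x k = x j - t * (x j - x k) := by ring
      rw [hx'def]; simp only [hwj]; rw [this, htδ]
    have hx'k : x' k = x k + δ := by
      have : (1 - t) * x k + t * x j = x k + t * (x j - x k) := by ring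
      rw [hx'def]; simp only [hwk]; rw [this, htδ]
    have hx'i : ∀ i, i ≠ j → i ≠ k → x' i = x i := fun i h1 h2 => by
      rw [hx'def]; simp only [hwi i h1 h2]; ring
    have hxform : ∀ i, x' i = x i + ((if i = j then -δ else 0) + (if i = k then δ else 0)) := by
      intro i
      by_cases h1 : i = j
      · subst h1; rw [hx'j, if_pos rfl, if_neg hjk']; ring
      · by_cases h2 : i = k
        · subst h2; rw [hx'k, if_neg h1, if_pos rfl]; ring
        · rw [hx'i i h1 h2, if_neg h1, if_neg h2]; ring
    have hsum' : ∀ s : Finset (Fin m), ∑ i ∈ s, x' i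
        = ∑ i ∈ s, x i + ((if j ∈ s then -δ else 0) + (if k ∈ s then δ else 0)) := by
      intro s
      simp only [hxform, Finset.sum_add_distrib, Finset.sum_ite_eq' s]
    have hmaj' : ∀ l : ℕ, l ≤ m → ∑ i ∈ univ.filter (fun i : Fin m => (i : ℕ) < l), y i ≤
        ∑ i ∈ univ.filter (fun i : Fin m => (i : ℕ) < l), x' i := by
      intro l hl
      rw [hsum' (univ.filter (fun i : Fin m => (i : ℕ) < l))]
      by_cases hjs : j ∈ univ.filter (fun i : Fin m => (i : ℕ) < l)
      · by_cases hks : k ∈ univ.filter (fun i : Fin m => (i : ℕ) < l)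
        · simp only [hjs, hks, if_pos]
          have := hmaj l hl
          linarith
        · simp only [hjs, if_pos, hks, if_neg, not_false_iff]
          have hlk : l ≤ (k : ℕ) := by
            by_contra hc
            exact hks (by simp; omega)
          have key : ∑ i ∈ univ.filter (fun i : Fin m => (i : ℕ) < l), (if i = j then δ else 0)
              ≤ ∑ i ∈ univ.filter (fun i : Fin m => (i : ℕ) < l), (x i - y i) := by
            apply Finset.sum_le_sum
            intro i hi
            by_cases hij : i = j
            · subst hij; simp; linarith
            · simp only [hij, if_neg, not_false_iff]
              have hil : (i : ℕ) < l := (mem_filter.mp hi).2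
              have hik : i < k := Fin.lt_def.mpr (by omega)
              linarith [hgood i hik]
          rw [Finset.sum_ite_eq' _ j (fun _ => δ), if_pos hjs, Finset.sum_sub_distrib] at key
          linarith
      · have hks : k ∉ univ.filter (fun i : Fin m => (i : ℕ) < l) := by
          intro hks
          apply hjs
          have hkl : (k : ℕ) < l := (mem_filter.mp hks).2
          have hjknat : (j : ℕ) < (k : ℕ) := Fin.lt_def.mp hjk
          simp; omega
        simp only [hjs, hks, if_neg, not_false_iff]
        have := hmaj l hl
        linarith
    have hsumtot : ∑ i, x' i = ∑ i, x i := by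
      rw [hsum' univ]
      simp
    have hcard' : (univ.filter (fun i => x' i ≠ y i)).card ≤ n := by
      rcases le_or_gt (x j - y j) (y k - x k) with hc | hc
      · -- δ = x j - y j, x' j = y j
        have hδeq : δ = x j - y j := min_eq_left hc
        have hx'jy : x' j = y j := by rw [hx'j, hδeq]; ring
        have hsub : univ.filter (fun i => x' i ≠ y i)
            ⊆ (univ.filter (fun i => x i ≠ y i)).erase j := by
          intro i hi
          have hi' : x' i ≠ y i := (mem_filter.mp hi).2
          have hij : i ≠ j := by rintro rfl; exact hi' hx'jy
          refine mem_erase.mpr ⟨hij, ?_⟩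
          simp only [mem_filter, mem_univ, true_and]
          by_cases hik : i = k
          · subst hik; exact ne_of_lt hkx
          · rw [← hx'i i hij hik]; exact hi'
        have hjmem : j ∈ univ.filter (fun i => x i ≠ y i) := by
          simp only [mem_filter, mem_univ, true_and]
          exact (ne_of_lt hjx).symm
        have h1 := Finset.card_le_card hsub
        rw [Finset.card_erase_of_mem hjmem] at h1
        have h2 := Finset.card_pos.mpr ⟨j, hjmem⟩
        omega
      · have hδeq : δ = y k - x k := min_eq_right hc.le
        have hx'ky : x' k = y k := by rw [hx'k, hδeq]; ring
        have hsub : univ.filter (fun i => x' i ≠ y i)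
            ⊆ (univ.filter (fun i => x i ≠ y i)).erase k := by
          intro i hi
          have hi' : x' i ≠ y i := (mem_filter.mp hi).2
          have hik : i ≠ k := by rintro rfl; exact hi' hx'ky
          refine mem_erase.mpr ⟨hik, ?_⟩
          simp only [mem_filter, mem_univ, true_and]
          by_cases hij : i = j
          · subst hij; exact (ne_of_lt hjx).symm
          · rw [← hx'i i hij hik]; exact hi'
        have hkmem : k ∈ univ.filter (fun i => x i ≠ y i) := by
          simp only [mem_filter, mem_univ, true_and]
          exact ne_of_lt hkx
        have h1 := Finset.card_le_card hsub
        rw [Finset.card_erase_of_mem hkmem] at h1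
        have h2 := Finset.card_pos.mpr ⟨k, hkmem⟩
        omega
    obtain ⟨z, hzC, hzge, hzsum⟩ := ih x' hx'C hcard' hmaj'
    exact ⟨z, hzC, hzge, by rw [hzsum, hsumtot]⟩

theorem boundary_weakMaj_sum_eq {m : ℕ} (hm : 2 ≤ m) (C : Set (Fin m → ℝ))
    (hconv : Convex ℝ C)
    (hsym : ∀ a ∈ C, ∀ σ : Equiv.Perm (Fin m), a ∘ σ ∈ C)
    (hCN : C ⊆ Nbar m)
    (x : Fin m → ℝ) (hx : x ∈ C) (hxsort : Antitone x)
    (y : Fin m → ℝ) (hy : ∀ i, 0 ≤ y i) (hysort : Antitone y)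
    (hmaj : ∀ k : ℕ, k ≤ m →
      ∑ i ∈ univ.filter (fun i : Fin m => (i : ℕ) < k), y i ≤
        ∑ i ∈ univ.filter (fun i : Fin m => (i : ℕ) < k), x i)
    (hyN : y ∈ Nbar m)
    (hbdry : (∃ i j, i ≠ j ∧ y i * y j = 1) ∨
      ∏ i, (1 - y i) + ∑ i, y i * ∏ j ∈ univ.erase i, (1 - y j) = 0)
    (hy1 : 1 < y ⟨0, by omega⟩) :
    ∑ i, y i = ∑ i, x i := by
  set i0 : Fin m := ⟨0, by omega⟩ with hi0def
  have hy0 : 1 < y i0 := hy1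
  have hytail : ∀ i, i ≠ i0 → y i < 1 := by
    intro i hi
    have h2 := hyN.2.1 i0 i (Ne.symm hi)
    nlinarith [hy i]
  have huniv : univ.filter (fun i : Fin m => (i : ℕ) < m) = univ :=
    Finset.filter_true_of_mem (fun i _ => i.isLt)
  have hsumle : ∑ i, y i ≤ ∑ i, x i := by
    have := hmaj m le_rfl; rwa [huniv] at this
  by_contra hne
  have hlt : ∑ i, y i < ∑ i, x i := lt_of_le_of_ne hsumle hne
  have hGy_le : 1 / (1 - y i0) + ∑ i ∈ univ.erase i0, y i / (1 - y i) ≤ 0 :=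
    G_nonpos y i0 hyN hy0 hytail
  have hGy : 1 / (1 - y i0) + ∑ i ∈ univ.erase i0, y i / (1 - y i) = 0 := by
    rcases hbdry with ⟨i, j, hij, hprod⟩ | hzero
    · obtain ⟨p, hp, hpy⟩ : ∃ p, p ≠ i0 ∧ y p * y i0 = 1 := by
        by_cases hii : i = i0
        · subst hii
          exact ⟨j, Ne.symm hij, by rw [mul_comm]; exact hprod⟩
        · by_cases hjj : j = i0
          · subst hjj
            exact ⟨i, hii, hprod⟩
          · exfalso
            have h1 := hytail i hii
            have h2 := hytail j hjj
            nlinarith [hy i, hy j]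
      have hplt := hytail p hp
      have hterm : y p / (1 - y p) = 1 / (y i0 - 1) := by
        rw [div_eq_div_iff (by linarith) (by linarith)]
        linear_combination hpy
      have hsum_ge : 1 / (y i0 - 1) ≤ ∑ i ∈ univ.erase i0, y i / (1 - y i) := by
        rw [← hterm]
        refine Finset.single_le_sum (f := fun i => y i / (1 - y i)) ?_
          (Finset.mem_erase.mpr ⟨hp, Finset.mem_univ p⟩)
        intro i hi
        exact div_nonneg (hy i) (by linarith [hytail i (Finset.mem_erase.mp hi).1])
      have h11 : 1 / (1 - y i0) = -(1 / (y i0 - 1)) := by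
        have h12 : (1:ℝ) - y i0 = -(y i0 - 1) := by ring
        rw [h12, div_neg]
      linarith
    · rw [prod_sum_factor y i0 (by linarith) (fun i hi => (hytail i hi).ne)] at hzero
      have hPy : 0 < ∏ i ∈ univ.erase i0, (1 - y i) :=
        Finset.prod_pos (fun i hi => by
          have := hytail i (Finset.mem_erase.mp hi).1; linarith)
      have hne2 : (∏ i ∈ univ.erase i0, (1 - y i)) * (1 - y i0) ≠ 0 :=
        ne_of_lt (mul_neg_of_pos_of_neg hPy (by linarith))
      exact (mul_eq_zero.mp hzero).resolve_left hne2
  obtain ⟨z, hzC, hzge, hzsum⟩ := exists_dominating C hconv hsym y hysort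
    (univ.filter (fun i => x i ≠ y i)).card x hx le_rfl hmaj
  have hzN := hCN hzC
  have hz0 : 1 < z i0 := lt_of_lt_of_le hy0 (hzge i0)
  have hztail : ∀ i, i ≠ i0 → z i < 1 := by
    intro i hi
    have h2 := hzN.2.1 i0 i (Ne.symm hi)
    nlinarith [hzN.1 i]
  have hGz_le : 1 / (1 - z i0) + ∑ i ∈ univ.erase i0, z i / (1 - z i) ≤ 0 :=
    G_nonpos z i0 hzN hz0 hztail
  obtain ⟨p, hp⟩ : ∃ p, y p < z p := by
    by_contra hc
    push_neg at hc
    have : ∑ i, z i ≤ ∑ i, y i := Finset.sum_le_sum fun i _ => hc i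
    rw [hzsum] at this
    linarith
  have hmono1 : 1 / (1 - y i0) ≤ 1 / (1 - z i0) :=
    one_div_le_one_div_of_neg_of_le (by linarith) (by linarith [hzge i0])
  have hmono2 : ∀ i ∈ univ.erase i0, y i / (1 - y i) ≤ z i / (1 - z i) := by
    intro i hi
    have hi' := (Finset.mem_erase.mp hi).1
    have h1 := hytail i hi'
    have h2 := hztail i hi'
    have h3 := hzge i
    have h4 := hy i
    rw [div_le_div_iff₀ (by linarith) (by linarith)]
    nlinarith
  have hstrict : 1 / (1 - y i0) + ∑ i ∈ univ.erase i0, y i / (1 - y i)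
      < 1 / (1 - z i0) + ∑ i ∈ univ.erase i0, z i / (1 - z i) := by
    by_cases hpi : p = i0
    · have hp0 : y i0 < z i0 := by rw [← hpi]; exact hp
      have hlt1 : 1 / (1 - y i0) < 1 / (1 - z i0) :=
        one_div_lt_one_div_of_neg_of_lt (by linarith) (by linarith)
      exact add_lt_add_of_lt_of_le hlt1 (Finset.sum_le_sum hmono2)
    · have hmemp : p ∈ univ.erase i0 := Finset.mem_erase.mpr ⟨hpi, Finset.mem_univ p⟩
      have hltp : y p / (1 - y p) < z p / (1 - z p) := by
        have h1 := hytail p hpi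
        have h2 := hztail p hpi
        have h4 := hy p
        rw [div_lt_div_iff₀ (by linarith) (by linarith)]
        nlinarith
      exact add_lt_add_of_le_of_lt hmono1
        (Finset.sum_lt_sum hmono2 ⟨p, hmemp, hltp⟩)
  linarith
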